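/- Let n ≥ 4, let V be a set of n vertices, and let X ⊆ V satisfy n/3 < |X| < n. Then the 3-uniform hypergraph H on V whose edges are exactly the triples e ⊆ V with |e∩X| ≠ 2 contains no tight Hamiltonian cycle. -/

import Mathlib

open Finset

variable {V : Type} [Fintype V] [DecidableEq V]

/-- The degree of a vertex in a hypergraph given by its edge set. -/
def hypDeg (E : Finset (Finset V)) (v : V) : ℕ :=
  (E.filter (fun e => v ∈ e)).card

/-- The pair degree of two vertices in a hypergraph. -/
def pairDeg (E : Finset (Finset V)) (u v : V) : ℕ :=
  (E.filter (fun e => u ∈ e ∧ v ∈ e)).card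

/-- The joint neighbourhood `N(u,v) = {w : uvw ∈ E}`. -/
def jointNbhd (E : Finset (Finset V)) (u v : V) : Finset V :=
  Finset.univ.filter (fun w => ({u, v, w} : Finset V) ∈ E)

/-- A 3-uniform hypergraph has a tight Hamiltonian cycle: a cyclic ordering of all
vertices such that every three cyclically consecutive vertices form an edge. -/
def HasTightHamCycle (E : Finset (Finset V)) : Prop :=
  ∃ x : ZMod (Fintype.card V) → V, Function.Bijective x ∧
    ∀ i : ZMod (Fintype.card V), ({x i, x (i + 1), x (i + 2)} : Finset V) ∈ E

/-- The link graph of a vertex `v`. -/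
def linkGraph (E : Finset (Finset V)) (v : V) : SimpleGraph V where
  Adj x y := x ≠ y ∧ ({v, x, y} : Finset V) ∈ E
  symm := by
    constructor
    rintro x y ⟨hxy, he⟩
    exact ⟨hxy.symm, by rwa [Finset.pair_comm y x]⟩
  loopless := ⟨fun x h => h.1 rfl⟩

instance (E : Finset (Finset V)) (v : V) : DecidableRel (linkGraph E v).Adj :=
  fun x y => inferInstanceAs (Decidable (x ≠ y ∧ ({v, x, y} : Finset V) ∈ E))

/-- Number of edges of a graph with both endpoints in `A`. -/
def eIn (G : SimpleGraph V) [DecidableRel G.Adj] (A : Finset V) : ℕ :=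
  (G.edgeFinset.filter (fun e => e ∈ A.sym2)).card

/-- Number of edges of a graph with one endpoint in `A` and one in `B`
(for disjoint `A` `B`, as the count of ordered pairs). -/
def eBetween (G : SimpleGraph V) [DecidableRel G.Adj] (A B : Finset V) : ℕ :=
  ((A ×ˢ B).filter (fun p => G.Adj p.1 p.2)).card

/-- Number of `x`-`y` paths of length `k` in the subgraph of `G` induced on `A`. -/
noncomputable def pathCount (G : SimpleGraph V) (A : Finset V) (x y : V) (k : ℕ) : ℕ :=
  Nat.card {p : Fin (k + 1) → V // Function.Injective p ∧ (∀ i, p i ∈ A) ∧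
    p ⟨0, by omega⟩ = x ∧ p ⟨k, by omega⟩ = y ∧
    ∀ (i : ℕ) (h : i + 1 < k + 1), G.Adj (p ⟨i, by omega⟩) (p ⟨i + 1, h⟩)}

/-- The subgraph of `G` induced on `A` is `(β,ℓ)`-robust. -/
def IsRobust (G : SimpleGraph V) (A : Finset V) (β : ℝ) (ℓ : ℕ) : Prop :=
  ∀ x ∈ A, ∀ y ∈ A, x ≠ y → β * (A.card : ℝ) ^ (ℓ - 1) ≤ (pathCount G A x y ℓ : ℝ)

/-- The subgraph of `L` induced on `U` is `μ`-inseparable. -/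
def IsInseparable (L : SimpleGraph V) [DecidableRel L.Adj] (U : Finset V) (μ : ℝ) : Prop :=
  (∀ v ∈ U, μ * (U.card : ℝ) ≤ ((U.filter (fun u => L.Adj v u)).card : ℝ)) ∧
  (∀ X Y : Finset V, Disjoint X Y → X ∪ Y = U →
    μ * (U.card : ℝ) ≤ (X.card : ℝ) → μ * (U.card : ℝ) ≤ (Y.card : ℝ) →
    μ ^ 2 * (U.card : ℝ) ^ 2 ≤ (eBetween L X Y : ℝ))

/-- The Setup: a `3`-uniform hypergraph `E` with minimum vertex degree at least
`(5/9+α)n²/2` together with, for each vertex `v`, (the vertex set `Rv v` of) an induced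
subgraph `R_v` of the link graph `L_v` as provided by the Robust subgraphs proposition. -/
def SetupHyp (α β : ℝ) (ℓ : ℕ) (E : Finset (Finset V)) (Rv : V → Finset V) : Prop :=
  (∀ e ∈ E, e.card = 3) ∧
  (∀ v : V, (5/9 + α) * (Fintype.card V : ℝ) ^ 2 / 2 ≤ (hypDeg E v : ℝ)) ∧
  (∀ v : V, (2/3 + α/2) * (Fintype.card V : ℝ) ≤ ((Rv v).card : ℝ)) ∧
  (∀ v : V, (eBetween (linkGraph E v) (Rv v) (Rv v)ᶜ : ℝ) ≤ α * (Fintype.card V : ℝ) ^ 2 / 4) ∧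
  (∀ v : V, (5/9 + α/2) * (Fintype.card V : ℝ) ^ 2 / 2
      - ((Fintype.card V : ℝ) - ((Rv v).card : ℝ)) ^ 2 / 2 ≤ (eIn (linkGraph E v) (Rv v) : ℝ)) ∧
  (∀ v : V, IsRobust (linkGraph E v) (Rv v) β ℓ)

/-- The pair `xy` is `ζ`-connectable: `xy` is an edge of `R_v` for at least `ζn` vertices `v`. -/
def Connectable (E : Finset (Finset V)) (Rv : V → Finset V) (ζ : ℝ) (x y : V) : Prop :=
  ζ * (Fintype.card V : ℝ) ≤
    (({v : V | x ∈ Rv v ∧ y ∈ Rv v ∧ (linkGraph E v).Adj x y} : Set V).ncard : ℝ)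

/-- `f` enumerates the vertices of a tight path (of length `m - 2`) in the hypergraph `E`. -/
def IsTightPath (E : Finset (Finset V)) {m : ℕ} (f : Fin m → V) : Prop :=
  Function.Injective f ∧
  ∀ (i : ℕ) (h : i + 2 < m),
    ({f ⟨i, by omega⟩, f ⟨i + 1, by omega⟩, f ⟨i + 2, h⟩} : Finset V) ∈ E

/-- Number of tight `(x,y)`-`(z,w)`-paths of length `3(ℓ+1)` in `E`. -/
noncomputable def connCount (E : Finset (Finset V)) (ℓ : ℕ) (x y z w : V) : ℕ :=
  Nat.card {f : Fin (3*ℓ+5) → V // IsTightPath E f ∧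
    f ⟨0, by omega⟩ = x ∧ f ⟨1, by omega⟩ = y ∧
    f ⟨3*ℓ+3, by omega⟩ = z ∧ f ⟨3*ℓ+4, by omega⟩ = w}

/-- Number of tight `(x,y)`-`(z,w)`-paths of length `3(ℓ+1)` in `E` all of whose internal
vertices lie in `Res`. -/
noncomputable def connCountIn (E : Finset (Finset V)) (ℓ : ℕ) (Res : Finset V) (x y z w : V) : ℕ :=
  Nat.card {f : Fin (3*ℓ+5) → V // IsTightPath E f ∧
    f ⟨0, by omega⟩ = x ∧ f ⟨1, by omega⟩ = y ∧
    f ⟨3*ℓ+3, by omega⟩ = z ∧ f ⟨3*ℓ+4, by omega⟩ = w ∧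
    ∀ i : Fin (3*ℓ+5), 2 ≤ (i : ℕ) → (i : ℕ) ≤ 3*ℓ+2 → f i ∈ Res}

/-- Conclusion of the Connecting Lemma for the parameters `(ζ, θ)`. -/
def ConnProp (E : Finset (Finset V)) (Rv : V → Finset V) (ζ θ : ℝ) (ℓ : ℕ) : Prop :=
  ∀ x y z w : V, ([x, y, z, w] : List V).Nodup →
    Connectable E Rv ζ x y → Connectable E Rv ζ z w →
    θ * (Fintype.card V : ℝ) ^ (3*ℓ+1) ≤ (connCount E ℓ x y z w : ℝ)

/-- Conclusion of the Reservoir Lemma: every pair of `ζ`-connectable pairs is connected by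
many tight paths with all internal vertices in `Res`. -/
def ReservoirProp (E : Finset (Finset V)) (Rv : V → Finset V) (ζ θ : ℝ) (ℓ : ℕ)
    (Res : Finset V) : Prop :=
  ∀ x y z w : V, ([x, y, z, w] : List V).Nodup →
    Connectable E Rv ζ x y → Connectable E Rv ζ z w →
    θ * (Res.card : ℝ) ^ (3*ℓ+1) / 2 ≤ (connCountIn E ℓ Res x y z w : ℝ)

/-- Setup 2: the Connecting Lemma holds for `(ζ*,θ*)` and `(ζ**,θ**)` and `Res` is a
reservoir set. -/
def Setup2Hyp (ζs θs ζss θss : ℝ) (ℓ : ℕ) (E : Finset (Finset V)) (Rv : V → Finset V)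
    (Res : Finset V) : Prop :=
  ConnProp E Rv ζs θs ℓ ∧ ConnProp E Rv ζss θss ℓ ∧
  θs ^ 2 * (Fintype.card V : ℝ) / 2 ≤ (Res.card : ℝ) ∧
  (Res.card : ℝ) ≤ θs ^ 2 * (Fintype.card V : ℝ) ∧
  ReservoirProp E Rv ζss θss ℓ Res

/-- A vertex `z` is absorbable. -/
def Absorbable (E : Finset (Finset V)) (Rv : V → Finset V) (ζs : ℝ) (z : V) : Prop :=
  (Fintype.card V : ℝ) ^ 4 / 2 ^ 21 ≤
    (({q : V × V × V × V |
        ({q.1, q.2.1, z} : Finset V) ∈ E ∧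
        ({q.2.1, z, q.2.2.1} : Finset V) ∈ E ∧
        ({z, q.2.2.1, q.2.2.2} : Finset V) ∈ E ∧
        ({q.1, q.2.1, q.2.2.1} : Finset V) ∈ E ∧
        ({q.2.1, q.2.2.1, q.2.2.2} : Finset V) ∈ E ∧
        Connectable E Rv ζs q.1 q.2.1 ∧
        Connectable E Rv ζs q.2.2.1 q.2.2.2} : Set (V × V × V × V)).ncard : ℝ)

/-- `(a,b,c,d,z,x,y,y',x')` is a `v`-absorber. -/
def IsAbsorber (E : Finset (Finset V)) (Rv : V → Finset V) (ζs : ℝ)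
    (v a b c d z x y y' x' : V) : Prop :=
  ([a, b, c, d, z, x, y, y', x'] : List V).Nodup ∧
  v ∉ ([a, b, c, d, z, x, y, y', x'] : List V) ∧
  ({z, a, b} : Finset V) ∈ E ∧ ({z, b, c} : Finset V) ∈ E ∧ ({z, c, d} : Finset V) ∈ E ∧
  ({z, x, y} : Finset V) ∈ E ∧ ({z, y, y'} : Finset V) ∈ E ∧ ({z, y', x'} : Finset V) ∈ E ∧
  ({x, y, y'} : Finset V) ∈ E ∧ ({y, y', x'} : Finset V) ∈ E ∧
  Connectable E Rv ζs a b ∧ Connectable E Rv ζs c d ∧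
  Connectable E Rv ζs x y ∧ Connectable E Rv ζs y' x' ∧
  ({v, a, b} : Finset V) ∈ E ∧ ({v, b, c} : Finset V) ∈ E ∧ ({v, c, d} : Finset V) ∈ E

lemma inter_card_two_aux {V : Type} [DecidableEq V] {a b c : V} {X : Finset V}
    (hab : a ≠ b) (hac : a ≠ c) (hbc : b ≠ c)
    (ha : a ∈ X) (hb : b ∉ X) (hc : c ∈ X) :
    (({a, b, c} : Finset V) ∩ X).card = 2 := by
  have h : ({a, b, c} : Finset V) ∩ X = {a, c} := by
    ext v
    simp only [Finset.mem_inter, Finset.mem_insert, Finset.mem_singleton]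
    constructor
    · rintro ⟨(rfl | rfl | rfl), hv⟩
      · exact Or.inl rfl
      · exact absurd hv hb
      · exact Or.inr rfl
    · rintro (rfl | rfl)
      · exact ⟨Or.inl rfl, ha⟩
      · exact ⟨Or.inr (Or.inr rfl), hc⟩
  rw [h, Finset.card_pair hac]

theorem extremal_example_no_tight_ham_cycle
    (V : Type) [Fintype V] [DecidableEq V]
    (hn : 4 ≤ Fintype.card V) (X : Finset V)
    (hX1 : (Fintype.card V : ℝ) / 3 < (X.card : ℝ)) (hX2 : X.card < Fintype.card V)
    (E : Finset (Finset V))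
    (hE : ∀ e : Finset V, e ∈ E ↔ e.card = 3 ∧ (e ∩ X).card ≠ 2) :
    ¬ HasTightHamCycle E := by
  have hnn : 4 ≤ Fintype.card V := hn
  set n := Fintype.card V with hn_def
  rintro ⟨x, hbij, hcyc⟩
  haveI : NeZero n := ⟨by omega⟩
  -- basic facts about ZMod n
  have h1 : (1 : ZMod n) ≠ 0 := by
    intro h
    have h' : ((1 : ℕ) : ZMod n) = 0 := by exact_mod_cast h
    have := ZMod.val_cast_of_lt (show 1 < n by omega)
    rw [h', ZMod.val_zero] at this
    omega
  have h2 : (2 : ZMod n) ≠ 0 := by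
    intro h
    have h' : ((2 : ℕ) : ZMod n) = 0 := by exact_mod_cast h
    have := ZMod.val_cast_of_lt (show 2 < n by omega)
    rw [h', ZMod.val_zero] at this
    omega
  have hd1 : ∀ i : ZMod n, i ≠ i + 1 := by
    intro i h
    have h' : i + 0 = i + 1 := by simpa using h
    exact h1 (add_left_cancel h').symm
  have hd2 : ∀ i : ZMod n, i ≠ i + 2 := by
    intro i h
    have h' : i + 0 = i + 2 := by simpa using h
    exact h2 (add_left_cancel h').symm
  have hinj := hbij.1
  have hne1 : ∀ i : ZMod n, x i ≠ x (i + 1) := fun i h => hd1 i (hinj h)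
  have hne2 : ∀ i : ZMod n, x i ≠ x (i + 2) := fun i h => hd2 i (hinj h)
  have hne12 : ∀ i : ZMod n, x (i + 1) ≠ x (i + 2) := by
    intro i h
    have := hinj h
    have : (1 : ZMod n) = 2 := by
      have := add_left_cancel this
      exact this
    have h' : ((1 : ℕ) : ZMod n) = ((2 : ℕ) : ZMod n) := by exact_mod_cast this
    have e1 := ZMod.val_cast_of_lt (show 1 < n by omega)
    have e2 := ZMod.val_cast_of_lt (show 2 < n by omega)
    rw [h'] at e1
    omega
  have hcard2 : ∀ i : ZMod n,
      (({x i, x (i+1), x (i+2)} : Finset V) ∩ X).card ≠ 2 := fun i =>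
    ((hE _).mp (hcyc i)).2
  -- Step A: two consecutive in X force the third in X
  have stepA : ∀ i : ZMod n, x i ∈ X → x (i + 1) ∈ X → x (i + 2) ∈ X := by
    intro i hi hi1
    by_contra hc
    apply hcard2 i
    have hperm : ({x i, x (i+1), x (i+2)} : Finset V)
        = ({x i, x (i+2), x (i+1)} : Finset V) := by
      ext v
      simp only [Finset.mem_insert, Finset.mem_singleton]
      tauto
    rw [hperm]
    exact inter_card_two_aux (hne2 i) (hne1 i) (hne12 i).symm hi hc hi1
  -- Step B: no two consecutive indices both in X
  have stepB : ∀ i : ZMod n, ¬ (x i ∈ X ∧ x (i + 1) ∈ X) := by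
    rintro i ⟨hi, hi1⟩
    have key : ∀ k : ℕ, x (i + k) ∈ X ∧ x (i + k + 1) ∈ X := by
      intro k
      induction k with
      | zero => simpa using ⟨hi, hi1⟩
      | succ k ih =>
        have h3 := stepA (i + k) ih.1 ih.2
        constructor
        · have : i + (↑(k+1) : ZMod n) = i + ↑k + 1 := by push_cast; ring
          rw [this]; exact ih.2
        · have : i + (↑(k+1) : ZMod n) + 1 = i + ↑k + 2 := by push_cast; ring
          rw [this]; exact h3
    have hXuniv : X = Finset.univ := by
      apply Finset.eq_univ_of_forall
      intro v
      obtain ⟨j, rfl⟩ := hbij.2 v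
      have hj : j = i + ((j - i).val : ℕ) := by
        rw [ZMod.natCast_val, ZMod.cast_id]
        ring
      rw [hj]
      exact (key (j - i).val).1
    rw [hXuniv, Finset.card_univ] at hX2
    omega
  -- Step C: i and i+2 not both in X
  have stepC : ∀ i : ZMod n, ¬ (x i ∈ X ∧ x (i + 2) ∈ X) := by
    rintro i ⟨hi, hi2⟩
    have hi1 : x (i + 1) ∉ X := fun h => stepB i ⟨hi, h⟩
    exact hcard2 i (inter_card_two_aux (hne1 i) (hne2 i) (hne12 i) hi hi1 hi2)
  -- counting
  set S : Finset (ZMod n) := Finset.univ.filter (fun i => x i ∈ X) with hS_def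
  have hSx : S.image x = X := by
    ext v
    simp only [Finset.mem_image, hS_def, Finset.mem_filter, Finset.mem_univ, true_and]
    constructor
    · rintro ⟨i, hi, rfl⟩; exact hi
    · intro hv
      obtain ⟨j, rfl⟩ := hbij.2 v
      exact ⟨j, hv, rfl⟩
  have hScard : S.card = X.card := by
    rw [← hSx, Finset.card_image_of_injective _ hinj]
  set S1 : Finset (ZMod n) := S.image (· + 1) with hS1_def
  set S2 : Finset (ZMod n) := S.image (· + 2) with hS2_def
  have hS1card : S1.card = S.card :=
    Finset.card_image_of_injective _ (add_left_injective 1)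
  have hS2card : S2.card = S.card :=
    Finset.card_image_of_injective _ (add_left_injective 2)
  have hmemS : ∀ i : ZMod n, i ∈ S ↔ x i ∈ X := by
    intro i; simp [hS_def]
  have hdisj01 : Disjoint S S1 := by
    rw [Finset.disjoint_left]
    intro j hj hj1
    obtain ⟨i, hi, rfl⟩ := Finset.mem_image.mp hj1
    exact stepB i ⟨(hmemS i).mp hi, (hmemS (i+1)).mp hj⟩
  have hdisj02 : Disjoint S S2 := by
    rw [Finset.disjoint_left]
    intro j hj hj2
    obtain ⟨i, hi, rfl⟩ := Finset.mem_image.mp hj2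
    exact stepC i ⟨(hmemS i).mp hi, (hmemS (i+2)).mp hj⟩
  have hdisj12 : Disjoint S1 S2 := by
    rw [Finset.disjoint_left]
    intro j hj1 hj2
    obtain ⟨i, hi, rfl⟩ := Finset.mem_image.mp hj1
    obtain ⟨i', hi', heq⟩ := Finset.mem_image.mp hj2
    have : i' + 1 = i := by
      have h' : i' + 1 + 1 = i + 1 := by rw [← heq]; ring
      exact add_right_cancel h'
    subst this
    exact stepB i' ⟨(hmemS i').mp hi', (hmemS (i'+1)).mp hi⟩
  have hunion : (S ∪ S1 ∪ S2).card = 3 * S.card := by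
    rw [Finset.card_union_of_disjoint, Finset.card_union_of_disjoint hdisj01,
      hS1card, hS2card]
    · ring
    · exact Finset.disjoint_union_left.mpr ⟨hdisj02, hdisj12⟩
  have hle : (S ∪ S1 ∪ S2).card ≤ n := by
    calc (S ∪ S1 ∪ S2).card ≤ Fintype.card (ZMod n) := Finset.card_le_univ _
    _ = n := ZMod.card n
  rw [hunion, hScard] at hle
  have : (3 * X.card : ℝ) ≤ (n : ℝ) := by exact_mod_cast hle
  linarith
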